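/- Let R be the normal closure in FreeGroup X of {r y | y ∈ Y} and G = FreeGroup X ⧸ R. The abelian group C̄ = K0 ⧸ ⁅K0, K0 ⊔ K1⁆ carries a G-module structure induced by the conjugation action g • a = s0(g) * a * s0(g)⁻¹ of FreeGroup X on K0 (the action descends since R acts trivially), and as a module over the group ring ℤ[G] it is free with basis the images of the generators FreeGroup.of (Sum.inr y), y ∈ Y; that is, C̄ is isomorphic as a ℤ[G]-module to the free module Y →₀ ℤ[G]. (This is the discrete form of the formula C̄_u(ℚ_p) ≅ O(G_u)*^{|Y|} for the abelianized free crossed module of the presentation.) -/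

import Mathlib

/-- The degeneracy `s₀ : F(X) → F(X ⊕ Y)`, sending each generator `x` to `Sum.inl x`. -/
def s0 (X Y : Type*) : FreeGroup X →* FreeGroup (X ⊕ Y) :=
  FreeGroup.lift fun x => FreeGroup.of (Sum.inl x)

/-- The face map `d₀ : F(X ⊕ Y) → F(X)`, with `d₀ x = x` and `d₀ y = 1`. -/
def d0 (X Y : Type*) : FreeGroup (X ⊕ Y) →* FreeGroup X :=
  FreeGroup.lift (Sum.elim FreeGroup.of fun _ => 1)

/-- The face map `d₁ : F(X ⊕ Y) → F(X)`, with `d₁ x = x` and `d₁ y = r y`. -/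
def d1 {X Y : Type*} (r : Y → FreeGroup X) : FreeGroup (X ⊕ Y) →* FreeGroup X :=
  FreeGroup.lift (Sum.elim FreeGroup.of r)

variable {X Y : Type*}

/-- The normal closure `R` of the defining relators in `F(X)`. -/
def RelN (r : Y → FreeGroup X) : Subgroup (FreeGroup X) :=
  Subgroup.normalClosure (Set.range r)

instance (r : Y → FreeGroup X) : (RelN r).Normal := Subgroup.normalClosure_normal

/-- The group `G = F(X) ⧸ R` of the presentation. -/
abbrev Gq (r : Y → FreeGroup X) := FreeGroup X ⧸ RelN r

/-- The subgroup `⁅K₀, K₀ ⊔ K₁⁆` of `K₀ = ker d₀`, viewed as a subgroup of `K₀`. -/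
def Nsub (r : Y → FreeGroup X) : Subgroup (d0 X Y).ker :=
  (⁅(d0 X Y).ker, (d0 X Y).ker ⊔ (d1 r).ker⁆).subgroupOf (d0 X Y).ker

instance (r : Y → FreeGroup X) : (Nsub r).Normal := Subgroup.normal_subgroupOf

open scoped commutatorElement in
/-- The quotient `K₀ ⧸ ⁅K₀, K₀ ⊔ K₁⁆` is abelian. -/
instance (r : Y → FreeGroup X) : CommGroup ((d0 X Y).ker ⧸ Nsub r) :=
  { (inferInstance : Group ((d0 X Y).ker ⧸ Nsub r)) with
    mul_comm := fun a b => by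
      induction a using QuotientGroup.induction_on with
      | H x =>
      induction b using QuotientGroup.induction_on with
      | H y =>
      rw [← QuotientGroup.mk_mul, ← QuotientGroup.mk_mul, QuotientGroup.eq]
      have : (x * y)⁻¹ * (y * x) = ⁅y⁻¹, x⁻¹⁆ := by
        simp [commutatorElement_def]; group
      rw [this, Nsub, Subgroup.mem_subgroupOf]
      have h1 : ((y⁻¹ : (d0 X Y).ker) : FreeGroup (X ⊕ Y)) ∈ (d0 X Y).ker := y⁻¹.2
      have h2 : ((x⁻¹ : (d0 X Y).ker) : FreeGroup (X ⊕ Y)) ∈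
          (d0 X Y).ker ⊔ (d1 r).ker := le_sup_left (a := (d0 X Y).ker) x⁻¹.2
      simpa [commutatorElement_def] using Subgroup.commutator_mem_commutator h1 h2 }

/-- `C̄ = K₀ ⧸ ⁅K₀, K₀ ⊔ K₁⁆`, the abelianized free crossed module, written additively. -/
abbrev Cbar (r : Y → FreeGroup X) := Additive ((d0 X Y).ker ⧸ Nsub r)

/-- The canonical map `K₀ → C̄`. -/
def toCbar (r : Y → FreeGroup X) (a : (d0 X Y).ker) : Cbar r :=
  Additive.ofMul (QuotientGroup.mk a : (d0 X Y).ker ⧸ Nsub r)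

/-- Each generator `y ∈ Y` lies in `K₀ = ker d₀`, since `d₀ y = 1`. -/
lemma of_inr_mem_ker_d0 (y : Y) : FreeGroup.of (Sum.inr y) ∈ (d0 X Y).ker := by
  simp [d0, MonoidHom.mem_ker]

/-- Conjugation by `s₀ g` preserves the normal subgroup `K₀ = ker d₀`. -/
lemma conj_s0_mem_ker_d0 (g : FreeGroup X) {a : FreeGroup (X ⊕ Y)}
    (ha : a ∈ (d0 X Y).ker) : s0 X Y g * a * (s0 X Y g)⁻¹ ∈ (d0 X Y).ker :=
  (d0 X Y).normal_ker.conj_mem a ha (s0 X Y g)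

namespace CbarAux

variable (r : Y → FreeGroup X)

open scoped commutatorElement

noncomputable def pr : FreeGroup X →* Gq r := QuotientGroup.mk' (RelN r)

abbrev ZG := MonoidAlgebra ℤ (Gq r)
abbrev AA := Y →₀ ZG r

noncomputable def gUnit : Gq r →* (ZG r)ˣ := (MonoidAlgebra.of ℤ (Gq r)).toHomUnits

lemma gUnit_coe (g : Gq r) : (gUnit r g : ZG r) = MonoidAlgebra.single g 1 := rfl

noncomputable def φmul : Gq r →* MulAut (Multiplicative (AA r)) where
  toFun g := AddEquiv.toMultiplicative ((DistribMulAction.toAddAut (ZG r)ˣ (AA r)) (gUnit r g))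
  map_one' := by ext a; simp
  map_mul' g h := by ext a; simp [mul_smul]

lemma φmul_apply (g : Gq r) (v : AA r) :
    φmul r g (Multiplicative.ofAdd v) =
      Multiplicative.ofAdd ((MonoidAlgebra.single g (1 : ℤ)) • v) := by
  show Multiplicative.ofAdd ((gUnit r g) • v) = _
  rw [Units.smul_def, gUnit_coe]

noncomputable def Φ : FreeGroup (X ⊕ Y) →* Multiplicative (AA r) ⋊[φmul r] Gq r :=
  FreeGroup.lift (Sum.elim
    (fun x => SemidirectProduct.inr (pr r (FreeGroup.of x)))
    (fun y => SemidirectProduct.inl (Multiplicative.ofAdd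
      (Finsupp.single y (1 : ZG r)))))

lemma Φ_of_inl (x : X) : Φ r (FreeGroup.of (Sum.inl x))
    = SemidirectProduct.inr (pr r (FreeGroup.of x)) := by simp [Φ]

lemma Φ_of_inr (y : Y) : Φ r (FreeGroup.of (Sum.inr y))
    = SemidirectProduct.inl (Multiplicative.ofAdd (Finsupp.single y (1 : ZG r))) := by
  simp [Φ]

lemma d0_s0 (g : FreeGroup X) : d0 X Y (s0 X Y g) = g := by
  have : (d0 X Y).comp (s0 X Y) = MonoidHom.id _ :=
    FreeGroup.ext_hom _ _ (fun x => by simp [d0, s0])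
  exact DFunLike.congr_fun this g

lemma d1_s0 (g : FreeGroup X) : d1 r (s0 X Y g) = g := by
  have : (d1 r).comp (s0 X Y) = MonoidHom.id _ :=
    FreeGroup.ext_hom _ _ (fun x => by simp [d1, s0])
  exact DFunLike.congr_fun this g

lemma Φ_right (w : FreeGroup (X ⊕ Y)) :
    (Φ r w).right = pr r (d0 X Y w) := by
  have : SemidirectProduct.rightHom.comp (Φ r) = (pr r).comp (d0 X Y) :=
    FreeGroup.ext_hom _ _ (fun a => by
      rcases a with x | y <;> simp [Φ_of_inl, Φ_of_inr, d0])
  exact DFunLike.congr_fun this w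

lemma Φ_s0 (g : FreeGroup X) : Φ r (s0 X Y g) = SemidirectProduct.inr (pr r g) := by
  have : (Φ r).comp (s0 X Y) = SemidirectProduct.inr.comp (pr r) :=
    FreeGroup.ext_hom _ _ (fun x => by simp [s0, Φ_of_inl])
  exact DFunLike.congr_fun this g

lemma pr_rel (y : Y) : pr r (r y) = 1 := by
  rw [pr, QuotientGroup.mk'_apply, QuotientGroup.eq_one_iff]
  exact Subgroup.subset_normalClosure (Set.mem_range_self y)

lemma pr_d0_eq_pr_d1 : (pr r).comp (d0 X Y) = (pr r).comp (d1 r) :=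
  FreeGroup.ext_hom _ _ (fun a => by
    rcases a with x | y <;> simp [d0, d1, pr_rel])

lemma pr_d0_of_mem_sup {w : FreeGroup (X ⊕ Y)}
    (hw : w ∈ (d0 X Y).ker ⊔ (d1 r).ker) : pr r (d0 X Y w) = 1 := by
  have hle : (d0 X Y).ker ⊔ (d1 r).ker ≤ ((pr r).comp (d0 X Y)).ker := by
    refine sup_le ?_ ?_
    · intro b hb
      simp [MonoidHom.mem_ker] at hb ⊢
      simp [hb]
    · intro b hb
      simp only [MonoidHom.mem_ker] at hb ⊢
      have := DFunLike.congr_fun (pr_d0_eq_pr_d1 r) b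
      simp only [MonoidHom.comp_apply] at this ⊢
      rw [this, hb, map_one]
  exact hle hw

noncomputable def homK : (d0 X Y).ker →* Multiplicative (AA r) where
  toFun a := (Φ r a).left
  map_one' := by simp
  map_mul' a b := by
    show (Φ r ((a : FreeGroup (X ⊕ Y)) * b)).left = _
    rw [map_mul, SemidirectProduct.mul_left, Φ_right,
      (show d0 X Y (a : FreeGroup (X ⊕ Y)) = 1 from a.2), map_one, map_one]
    rfl

lemma right_eq_one_left (p : Multiplicative (AA r) ⋊[φmul r] Gq r)
    (hp : p.right = 1) : p = SemidirectProduct.inl p.left := by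
  ext <;> simp [hp]

lemma commutator_le_kerΦ :
    ⁅(d0 X Y).ker, (d0 X Y).ker ⊔ (d1 r).ker⁆ ≤ (Φ r).ker := by
  rw [Subgroup.commutator_le]
  intro g₁ h₁ g₂ h₂
  have e₁ : Φ r g₁ = SemidirectProduct.inl (Φ r g₁).left := by
    refine right_eq_one_left r _ ?_
    rw [Φ_right, (by exact h₁ : d0 X Y g₁ = 1), map_one]
  have e₂ : Φ r g₂ = SemidirectProduct.inl (Φ r g₂).left := by
    refine right_eq_one_left r _ ?_
    rw [Φ_right]; exact pr_d0_of_mem_sup r h₂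
  rw [MonoidHom.mem_ker, map_commutatorElement, e₁, e₂, ← map_commutatorElement,
    commutatorElement_eq_one_iff_mul_comm.mpr (mul_comm _ _), map_one]


lemma Nsub_le_ker_homK : Nsub r ≤ (homK r).ker := by
  intro a ha
  rw [Nsub, Subgroup.mem_subgroupOf] at ha
  have : Φ r (a : FreeGroup (X ⊕ Y)) = 1 := commutator_le_kerΦ r ha
  show (Φ r (a : FreeGroup (X ⊕ Y))).left = 1
  rw [this]; rfl

noncomputable def Φbar : ((d0 X Y).ker ⧸ Nsub r) →* Multiplicative (AA r) :=
  QuotientGroup.lift (Nsub r) (homK r) (Nsub_le_ker_homK r)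

/-! cls machinery -/

def cls (w : FreeGroup (X ⊕ Y)) (h : w ∈ (d0 X Y).ker) :
    (d0 X Y).ker ⧸ Nsub r := QuotientGroup.mk ⟨w, h⟩

lemma cls_congr {w w' : FreeGroup (X ⊕ Y)} (e : w = w') (h : w ∈ (d0 X Y).ker)
    (h' : w' ∈ (d0 X Y).ker) : cls r w h = cls r w' h' := by subst e; rfl

lemma cls_eq_iff {w w' : FreeGroup (X ⊕ Y)} (h : w ∈ (d0 X Y).ker)
    (h' : w' ∈ (d0 X Y).ker) :
    cls r w h = cls r w' h' ↔ w⁻¹ * w' ∈ ⁅(d0 X Y).ker, (d0 X Y).ker ⊔ (d1 r).ker⁆ := by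
  rw [cls, cls, QuotientGroup.eq, Nsub, Subgroup.mem_subgroupOf]
  rfl

instance NN_normal : (⁅(d0 X Y).ker, (d0 X Y).ker ⊔ (d1 r).ker⁆).Normal := by
  have h1 : ((d0 X Y).ker ⊔ (d1 r).ker).Normal := Subgroup.sup_normal _ _
  exact Subgroup.commutator_normal _ _

lemma conj_cls (v : FreeGroup (X ⊕ Y)) {k k' : FreeGroup (X ⊕ Y)}
    (hk : k ∈ (d0 X Y).ker) (hk' : k' ∈ (d0 X Y).ker)
    (h : cls r k hk = cls r k' hk') :
    cls r (v * k * v⁻¹) ((d0 X Y).normal_ker.conj_mem k hk v)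
      = cls r (v * k' * v⁻¹) ((d0 X Y).normal_ker.conj_mem k' hk' v) := by
  rw [cls_eq_iff] at h ⊢
  have := (NN_normal r).conj_mem _ h v
  have e : v * (k⁻¹ * k') * v⁻¹ = (v * k * v⁻¹)⁻¹ * (v * k' * v⁻¹) := by group
  rwa [e] at this

noncomputable def Sgrp : Subgroup (FreeGroup (X ⊕ Y)) where
  carrier := {u | ∀ k (hk : k ∈ (d0 X Y).ker),
    cls r (u * k * u⁻¹) ((d0 X Y).normal_ker.conj_mem k hk u) = cls r k hk}
  one_mem' := fun k hk => cls_congr r (by group) _ _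
  mul_mem' := by
    intro u v hu hv k hk
    have h1 := hv k hk
    have h2 := hu (v * k * v⁻¹) ((d0 X Y).normal_ker.conj_mem k hk v)
    calc cls r (u * v * k * (u * v)⁻¹) _
        = cls r (u * (v * k * v⁻¹) * u⁻¹) _ := cls_congr r (by group) _ _
      _ = cls r (v * k * v⁻¹) _ := h2
      _ = cls r k hk := h1
  inv_mem' := by
    intro u hu k hk
    have hm : u⁻¹ * k * u ∈ (d0 X Y).ker := by
      simpa using (d0 X Y).normal_ker.conj_mem k hk u⁻¹
    have h := hu (u⁻¹ * k * u) hm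
    have h2 : cls r k hk = cls r (u⁻¹ * k * u) hm :=
      (cls_congr r (by group : u * (u⁻¹ * k * u) * u⁻¹ = k) _ hk).symm.trans h
    exact (cls_congr r (by group : u⁻¹ * k * u⁻¹⁻¹ = u⁻¹ * k * u) _ hm).trans h2.symm

lemma mem_Sgrp_iff {u : FreeGroup (X ⊕ Y)} : u ∈ Sgrp r ↔
    ∀ k (hk : k ∈ (d0 X Y).ker),
      cls r (u * k * u⁻¹) ((d0 X Y).normal_ker.conj_mem k hk u) = cls r k hk :=
  Iff.rfl

lemma ker_d0_le_Sgrp : (d0 X Y).ker ≤ Sgrp r := by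
  intro u hu
  rw [mem_Sgrp_iff]
  intro k hk
  rw [cls_eq_iff]
  have e : (u * k * u⁻¹)⁻¹ * k = ⁅u, k⁻¹⁆ := by
    simp [commutatorElement_def]; group
  rw [e]
  exact Subgroup.commutator_mem_commutator hu (le_sup_left (b := (d1 r).ker) (inv_mem hk))

lemma ker_d1_le_Sgrp : (d1 r).ker ≤ Sgrp r := by
  intro u hu
  rw [mem_Sgrp_iff]
  intro k hk
  rw [cls_eq_iff]
  have e : (u * k * u⁻¹)⁻¹ * k = ⁅u, k⁻¹⁆ := by
    simp [commutatorElement_def]; group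
  rw [e]
  have : ⁅u, k⁻¹⁆ ∈ ⁅(d0 X Y).ker ⊔ (d1 r).ker, (d0 X Y).ker⁆ :=
    Subgroup.commutator_mem_commutator (le_sup_right (a := (d0 X Y).ker) hu) (inv_mem hk)
  rwa [Subgroup.commutator_comm] at this

lemma Sgrp_normal : (Sgrp r).Normal := by
  constructor
  intro u hu v k hk
  have hk1 : v⁻¹ * k * v ∈ (d0 X Y).ker := by
    simpa using (d0 X Y).normal_ker.conj_mem k hk v⁻¹
  have h1 : cls r (u * (v⁻¹ * k * v) * u⁻¹) _ = cls r (v⁻¹ * k * v) hk1 :=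
    hu (v⁻¹ * k * v) hk1
  have h2 := conj_cls r v _ _ h1
  calc cls r (v * u * v⁻¹ * k * (v * u * v⁻¹)⁻¹) _
      = cls r (v * (u * (v⁻¹ * k * v) * u⁻¹) * v⁻¹) _ := cls_congr r (by group) _ _
    _ = cls r (v * (v⁻¹ * k * v) * v⁻¹) _ := h2
    _ = cls r k hk := cls_congr r (by group) _ _

lemma s0_relator_mem_Sgrp (y : Y) : s0 X Y (r y) ∈ Sgrp r := by
  have hb : s0 X Y (r y) * (FreeGroup.of (Sum.inr y))⁻¹ ∈ (d1 r).ker := by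
    rw [MonoidHom.mem_ker, map_mul, map_inv, d1_s0]
    have : d1 r (FreeGroup.of (Sum.inr y)) = r y := by simp [d1]
    rw [this, mul_inv_cancel]
  have : s0 X Y (r y)
      = (s0 X Y (r y) * (FreeGroup.of (Sum.inr y))⁻¹) * FreeGroup.of (Sum.inr y) := by
    group
  rw [this]
  exact (Sgrp r).mul_mem (ker_d1_le_Sgrp r hb) (ker_d0_le_Sgrp r (of_inr_mem_ker_d0 y))

lemma s0_RelN_mem_Sgrp {ρ : FreeGroup X} (hρ : ρ ∈ RelN r) : s0 X Y ρ ∈ Sgrp r := by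
  haveI := Sgrp_normal r
  haveI : ((Sgrp r).comap (s0 X Y)).Normal := Subgroup.Normal.comap (Sgrp_normal r) _
  have hle : RelN r ≤ (Sgrp r).comap (s0 X Y) := by
    apply Subgroup.normalClosure_le_normal
    rintro _ ⟨y, rfl⟩
    exact s0_relator_mem_Sgrp r y
  exact hle hρ

lemma conj_z_mem (g : FreeGroup X) (y : Y) :
    s0 X Y g * FreeGroup.of (Sum.inr y) * (s0 X Y g)⁻¹ ∈ (d0 X Y).ker :=
  conj_s0_mem_ker_d0 g (of_inr_mem_ker_d0 y)

noncomputable def cfun (y : Y) (gq : Gq r) : (d0 X Y).ker ⧸ Nsub r :=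
  Quotient.liftOn' gq
    (fun g => cls r (s0 X Y g * FreeGroup.of (Sum.inr y) * (s0 X Y g)⁻¹) (conj_z_mem g y))
    (by
      intro a b hab
      rw [QuotientGroup.leftRel_apply] at hab
      have hb : b = a * (a⁻¹ * b) := by group
      have hS := s0_RelN_mem_Sgrp r hab
      have h1 := hS (FreeGroup.of (Sum.inr y)) (of_inr_mem_ker_d0 y)
      have h2 := conj_cls r (s0 X Y a) _ _ h1
      calc cls r (s0 X Y a * FreeGroup.of (Sum.inr y) * (s0 X Y a)⁻¹) _
          = cls r (s0 X Y a * (s0 X Y (a⁻¹ * b) * FreeGroup.of (Sum.inr y)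
              * (s0 X Y (a⁻¹ * b))⁻¹) * (s0 X Y a)⁻¹) _ := h2.symm
        _ = cls r (s0 X Y b * FreeGroup.of (Sum.inr y) * (s0 X Y b)⁻¹) _ := by
            refine cls_congr r ?_ _ _
            rw [show s0 X Y b = s0 X Y a * s0 X Y (a⁻¹ * b) by rw [← map_mul, mul_inv_cancel_left]]
            group)

lemma cfun_mk (y : Y) (g : FreeGroup X) :
    cfun r y (QuotientGroup.mk g)
      = cls r (s0 X Y g * FreeGroup.of (Sum.inr y) * (s0 X Y g)⁻¹) (conj_z_mem g y) := rfl

noncomputable def ψadd : AA r →+ Additive ((d0 X Y).ker ⧸ Nsub r) :=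
  Finsupp.liftAddHom fun y =>
    (Finsupp.liftAddHom fun gq =>
      zmultiplesHom _ (Additive.ofMul (cfun r y gq)) :
      (Gq r →₀ ℤ) →+ Additive ((d0 X Y).ker ⧸ Nsub r)).comp
        (MonoidAlgebra.coeffAddEquiv : ZG r ≃+ (Gq r →₀ ℤ)).toAddMonoidHom

noncomputable def ψ : Multiplicative (AA r) →* ((d0 X Y).ker ⧸ Nsub r) :=
  AddMonoidHom.toMultiplicativeLeft (ψadd r)

lemma ψ_single (y : Y) (gq : Gq r) :
    ψ r (Multiplicative.ofAdd (Finsupp.single y (MonoidAlgebra.single gq (1 : ℤ))))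
      = cfun r y gq := by
  show Additive.toMul (ψadd r (Finsupp.single y (MonoidAlgebra.single gq (1 : ℤ)))) = _
  rw [ψadd, Finsupp.liftAddHom_apply_single]
  show Additive.toMul ((Finsupp.liftAddHom fun gq =>
      zmultiplesHom _ (Additive.ofMul (cfun r y gq)))
        (Finsupp.single gq (1 : ℤ))) = _
  rw [Finsupp.liftAddHom_apply_single]
  simp

lemma ker_d0_eq : (d0 X Y).ker
    = Subgroup.normalClosure (Set.range fun y : Y => FreeGroup.of (Sum.inr y)) := by
  apply le_antisymm
  · intro w hw
    set M := Subgroup.normalClosure (Set.range fun y : Y => FreeGroup.of (Sum.inr y))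
    haveI : M.Normal := Subgroup.normalClosure_normal
    have hcomp : (QuotientGroup.mk' M).comp ((s0 X Y).comp (d0 X Y))
        = QuotientGroup.mk' M := by
      apply FreeGroup.ext_hom
      rintro (x | y)
      · simp [d0, s0]
      · simp only [MonoidHom.comp_apply]
        have h1 : d0 X Y (FreeGroup.of (Sum.inr y)) = 1 := of_inr_mem_ker_d0 y
        rw [h1, map_one, map_one]
        symm
        rw [QuotientGroup.mk'_apply, QuotientGroup.eq_one_iff]
        exact Subgroup.subset_normalClosure (Set.mem_range_self y)
    have := DFunLike.congr_fun hcomp w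
    simp only [MonoidHom.comp_apply] at this
    rw [(by exact hw : d0 X Y w = 1), map_one, map_one] at this
    exact (QuotientGroup.eq_one_iff w).mp (by simpa using this.symm)
  · apply Subgroup.normalClosure_le_normal
    rintro _ ⟨y, rfl⟩
    exact of_inr_mem_ker_d0 y

def Gen : Set ((d0 X Y).ker) :=
  {k | ∃ (u : FreeGroup (X ⊕ Y)) (y : Y), (k : FreeGroup (X ⊕ Y)) = u * FreeGroup.of (Sum.inr y) * u⁻¹}

lemma closure_Gen : Subgroup.closure (Gen (X := X) (Y := Y)) = ⊤ := by
  apply Subgroup.map_injective ((d0 X Y).ker.subtype_injective)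
  rw [MonoidHom.map_closure]
  have him : ((d0 X Y).ker.subtype '' Gen)
      = Group.conjugatesOfSet (Set.range fun y : Y => FreeGroup.of (Sum.inr y)) := by
    ext w
    constructor
    · rintro ⟨k, ⟨u, y, hk⟩, rfl⟩
      refine Group.mem_conjugatesOfSet_iff.mpr ⟨FreeGroup.of (Sum.inr y),
        Set.mem_range_self y, ?_⟩
      rw [isConj_iff]
      exact ⟨u, hk.symm⟩
    · intro hw
      obtain ⟨a, ⟨y, rfl⟩, hc⟩ := Group.mem_conjugatesOfSet_iff.mp hw
      obtain ⟨u, hu⟩ := isConj_iff.mp hc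
      have hwk : w ∈ (d0 X Y).ker := by
        rw [← hu]
        exact (d0 X Y).normal_ker.conj_mem _ (of_inr_mem_ker_d0 y) u
      exact ⟨⟨w, hwk⟩, ⟨u, y, hu.symm⟩, rfl⟩
  rw [him, ← Subgroup.normalClosure]
  rw [← ker_d0_eq]
  have : Subgroup.map (d0 X Y).ker.subtype ⊤ = (d0 X Y).ker := by
    rw [← MonoidHom.range_eq_map, Subgroup.range_subtype]
  rw [this]

lemma conj_inl_left (p : Multiplicative (AA r) ⋊[φmul r] Gq r)
    (s : Multiplicative (AA r)) :
    (p * SemidirectProduct.inl s * p⁻¹).left = φmul r p.right s := by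
  simp only [SemidirectProduct.mul_left, SemidirectProduct.mul_right,
    SemidirectProduct.inv_left, SemidirectProduct.inv_right,
    SemidirectProduct.left_inl, SemidirectProduct.right_inl, mul_one, map_inv]
  rw [MulAut.inv_def, MulEquiv.apply_symm_apply, mul_comm p.left,
    mul_assoc, mul_inv_cancel, mul_one]

lemma Φ_left_conj (u : FreeGroup (X ⊕ Y)) (y : Y) :
    (Φ r (u * FreeGroup.of (Sum.inr y) * u⁻¹)).left
      = Multiplicative.ofAdd (Finsupp.single y
          (MonoidAlgebra.single (pr r (d0 X Y u)) (1 : ℤ))) := by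
  rw [map_mul, map_mul, map_inv, Φ_of_inr, conj_inl_left, Φ_right, φmul_apply]
  congr 1
  rw [Finsupp.smul_single, smul_eq_mul, mul_one]

lemma cls_conj_s0 (u : FreeGroup (X ⊕ Y)) (y : Y) :
    cls r (s0 X Y (d0 X Y u) * FreeGroup.of (Sum.inr y) * (s0 X Y (d0 X Y u))⁻¹)
        (conj_z_mem _ y)
      = cls r (u * FreeGroup.of (Sum.inr y) * u⁻¹)
        ((d0 X Y).normal_ker.conj_mem _ (of_inr_mem_ker_d0 y) u) := by
  set g := d0 X Y u
  have hk₀ : (s0 X Y g)⁻¹ * u ∈ (d0 X Y).ker := by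
    rw [MonoidHom.mem_ker, map_mul, map_inv, d0_s0]
    exact inv_mul_cancel g
  have h1 := ker_d0_le_Sgrp r hk₀ (FreeGroup.of (Sum.inr y)) (of_inr_mem_ker_d0 y)
  have h2 := conj_cls r (s0 X Y g) _ _ h1
  exact h2.symm.trans (cls_congr r (by group) _ _)

lemma psi_homK_eq : (ψ r).comp (homK r) = QuotientGroup.mk' (Nsub r) := by
  have hGen : Set.EqOn (⇑((ψ r).comp (homK r))) (⇑(QuotientGroup.mk' (Nsub r)))
      (Gen (X := X) (Y := Y)) := by
    rintro k ⟨u, y, hk⟩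
    have hleft : (Φ r (k : FreeGroup (X ⊕ Y))).left
        = Multiplicative.ofAdd (Finsupp.single y
            (MonoidAlgebra.single (pr r (d0 X Y u)) (1 : ℤ))) := by
      rw [hk]; exact Φ_left_conj r u y
    have : ((ψ r).comp (homK r)) k = cfun r y (pr r (d0 X Y u)) := by
      simp only [MonoidHom.comp_apply]
      show ψ r (Φ r (k : FreeGroup (X ⊕ Y))).left = _
      rw [hleft, ψ_single]
    rw [this]
    have hmk : cfun r y (pr r (d0 X Y u))
        = cls r (s0 X Y (d0 X Y u) * FreeGroup.of (Sum.inr y) * (s0 X Y (d0 X Y u))⁻¹)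
          (conj_z_mem _ y) := cfun_mk r y (d0 X Y u)
    rw [hmk, cls_conj_s0]
    show _ = QuotientGroup.mk k
    rw [show k = (⟨u * FreeGroup.of (Sum.inr y) * u⁻¹,
      (d0 X Y).normal_ker.conj_mem _ (of_inr_mem_ker_d0 y) u⟩ : (d0 X Y).ker) from
      Subtype.ext hk]
    rfl
  apply MonoidHom.ext
  intro k
  have hk : k ∈ Subgroup.closure (Gen (X := X) (Y := Y)) := by
    rw [closure_Gen]; trivial
  exact MonoidHom.eqOn_closure hGen hk

noncomputable def Fcomp : AA r →+ AA r :=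
  AddMonoidHom.mk' (fun a => Multiplicative.toAdd (Φbar r (ψ r (Multiplicative.ofAdd a))))
    (fun a b => by
      show Multiplicative.toAdd (Φbar r (ψ r (Multiplicative.ofAdd a * Multiplicative.ofAdd b))) = _
      rw [map_mul, map_mul]; rfl)

lemma Fcomp_single (y : Y) (gq : Gq r) :
    Fcomp r (Finsupp.single y (MonoidAlgebra.single gq (1 : ℤ)))
      = Finsupp.single y (MonoidAlgebra.single gq (1 : ℤ)) := by
  induction gq using QuotientGroup.induction_on with
  | H g =>
  show Multiplicative.toAdd (Φbar r (ψ r _)) = _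
  rw [ψ_single, cfun_mk]
  have : Φbar r (cls r (s0 X Y g * FreeGroup.of (Sum.inr y) * (s0 X Y g)⁻¹)
      (conj_z_mem g y)) = (Φ r (s0 X Y g * FreeGroup.of (Sum.inr y) * (s0 X Y g)⁻¹)).left := by
    rfl
  rw [this, Φ_left_conj, d0_s0]
  rfl

lemma Fcomp_eq_id : Fcomp r = AddMonoidHom.id (AA r) := by
  apply Finsupp.addHom_ext
  intro y m
  induction m using MonoidAlgebra.induction_on with
  | of g =>
      have : MonoidAlgebra.of ℤ (Gq r) g = MonoidAlgebra.single g (1 : ℤ) := rfl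
      rw [this, Fcomp_single]; rfl
  | add f g hf hg =>
      rw [Finsupp.single_add, map_add, map_add, hf, hg]
  | smul c f hf =>
      rw [← Finsupp.smul_single, map_zsmul, map_zsmul, hf]

lemma Φbar_ψ (a : Multiplicative (AA r)) : Φbar r (ψ r a) = a := by
  have := DFunLike.congr_fun (Fcomp_eq_id r) (Multiplicative.toAdd a)
  exact this

lemma ψ_Φbar (q : (d0 X Y).ker ⧸ Nsub r) : ψ r (Φbar r q) = q := by
  induction q using QuotientGroup.induction_on with
  | H k =>
  have := DFunLike.congr_fun (psi_homK_eq r) k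
  exact this

noncomputable def E : ((d0 X Y).ker ⧸ Nsub r) ≃* Multiplicative (AA r) where
  toFun := Φbar r
  invFun := ψ r
  left_inv := ψ_Φbar r
  right_inv := Φbar_ψ r
  map_mul' := map_mul _

noncomputable def e0 : Additive ((d0 X Y).ker ⧸ Nsub r) ≃+ AA r :=
  MulEquiv.toAdditiveLeft (E r)

lemma e0_apply (q : (d0 X Y).ker ⧸ Nsub r) :
    e0 r (Additive.ofMul q) = Multiplicative.toAdd (Φbar r q) := rfl

lemma e0_toCbar (a : (d0 X Y).ker) :
    e0 r (Additive.ofMul (QuotientGroup.mk a : (d0 X Y).ker ⧸ Nsub r))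
      = Multiplicative.toAdd ((Φ r (a : FreeGroup (X ⊕ Y))).left) := rfl

noncomputable def modC : Module (ZG r) (Additive ((d0 X Y).ker ⧸ Nsub r)) where
  smul c v := (e0 r).symm (c • e0 r v)
  one_smul v := by
    show (e0 r).symm ((1 : ZG r) • e0 r v) = v
    rw [one_smul, AddEquiv.symm_apply_apply]
  mul_smul c d v := by
    show (e0 r).symm ((c * d) • e0 r v)
      = (e0 r).symm (c • e0 r ((e0 r).symm (d • e0 r v)))
    rw [AddEquiv.apply_symm_apply, mul_smul]
  smul_zero c := by
    show (e0 r).symm (c • e0 r 0) = 0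
    rw [map_zero, smul_zero, map_zero]
  smul_add c u v := by
    show (e0 r).symm (c • e0 r (u + v))
      = (e0 r).symm (c • e0 r u) + (e0 r).symm (c • e0 r v)
    rw [map_add, smul_add, map_add]
  add_smul c d v := by
    show (e0 r).symm ((c + d) • e0 r v)
      = (e0 r).symm (c • e0 r v) + (e0 r).symm (d • e0 r v)
    rw [add_smul, map_add]
  zero_smul v := by
    show (e0 r).symm ((0 : ZG r) • e0 r v) = 0
    rw [zero_smul, map_zero]

noncomputable def eL :
    letI := modC r
    Additive ((d0 X Y).ker ⧸ Nsub r) ≃ₗ[ZG r] AA r :=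
  letI := modC r
  { e0 r with
    map_smul' := fun c v => by
      show e0 r ((e0 r).symm (c • e0 r v)) = c • e0 r v
      exact (e0 r).apply_symm_apply _ }

lemma Φ_left_s0_conj (g : FreeGroup X) (w : FreeGroup (X ⊕ Y)) :
    (Φ r (s0 X Y g * w * (s0 X Y g)⁻¹)).left = φmul r (pr r g) (Φ r w).left := by
  rw [map_mul, map_mul, map_inv, Φ_s0]
  simp only [SemidirectProduct.mul_left, SemidirectProduct.mul_right,
    SemidirectProduct.inv_left, SemidirectProduct.inv_right,
    SemidirectProduct.left_inr, SemidirectProduct.right_inr, inv_one, map_one, one_mul, mul_one]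

lemma toAdd_φmul (gq : Gq r) (x : Multiplicative (AA r)) :
    Multiplicative.toAdd (φmul r gq x)
      = MonoidAlgebra.single gq (1 : ℤ) • Multiplicative.toAdd x := by
  exact congrArg Multiplicative.toAdd (φmul_apply r gq (Multiplicative.toAdd x))

end CbarAux

/-- The abelian group `C̄ = K₀ ⧸ ⁅K₀, K₀ ⊔ K₁⁆` carries a `ℤ[G]`-module structure induced by
the conjugation action `g • a = s₀(g) * a * s₀(g)⁻¹` of `F(X)` on `K₀`, and as a `ℤ[G]`-module
it is free on the images of the generators `y ∈ Y`; i.e. `C̄ ≅ ℤ[G]^{(Y)}`.  This is the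
discrete form of `C̄_u(ℚ_p) ≅ O(G_u)*^{|Y|}`. -/
theorem cbar_free_module (r : Y → FreeGroup X) :
    ∃ _i : Module (MonoidAlgebra ℤ (Gq r)) (Cbar r),
      (∀ (g : FreeGroup X) (a : (d0 X Y).ker),
        (MonoidAlgebra.single (QuotientGroup.mk g : Gq r) (1 : ℤ)) • toCbar r a =
          toCbar r ⟨s0 X Y g * ↑a * (s0 X Y g)⁻¹, conj_s0_mem_ker_d0 g a.2⟩) ∧
      ∃ e : Cbar r ≃ₗ[MonoidAlgebra ℤ (Gq r)] (Y →₀ MonoidAlgebra ℤ (Gq r)),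
        ∀ y : Y, e (toCbar r ⟨FreeGroup.of (Sum.inr y), of_inr_mem_ker_d0 y⟩) =
          Finsupp.single y (1 : MonoidAlgebra ℤ (Gq r)) := by
  classical
  refine ⟨CbarAux.modC r, ?_, ⟨CbarAux.eL r, ?_⟩⟩
  · intro g a
    show (CbarAux.e0 r).symm
      ((MonoidAlgebra.single (QuotientGroup.mk g : Gq r) (1 : ℤ))
        • CbarAux.e0 r (toCbar r a)) = _
    rw [AddEquiv.symm_apply_eq]
    have h1 : CbarAux.e0 r (toCbar r a)
        = Multiplicative.toAdd ((CbarAux.Φ r (a : FreeGroup (X ⊕ Y))).left) := rfl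
    have h2 : CbarAux.e0 r (toCbar r
        ⟨s0 X Y g * ↑a * (s0 X Y g)⁻¹, conj_s0_mem_ker_d0 g a.2⟩)
        = Multiplicative.toAdd ((CbarAux.Φ r (s0 X Y g * ↑a * (s0 X Y g)⁻¹)).left) := rfl
    rw [h1, h2, CbarAux.Φ_left_s0_conj, CbarAux.toAdd_φmul]
    rfl
  · intro y
    show CbarAux.e0 r (toCbar r ⟨FreeGroup.of (Sum.inr y), of_inr_mem_ker_d0 y⟩) = _
    have h1 : CbarAux.e0 r (toCbar r ⟨FreeGroup.of (Sum.inr y), of_inr_mem_ker_d0 y⟩)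
        = Multiplicative.toAdd ((CbarAux.Φ r (FreeGroup.of (Sum.inr y))).left) := rfl
    rw [h1, CbarAux.Φ_of_inr]
    rfl
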